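/- Let G = (V, V_E, E, w, v_I) be a weighted arena with maximum absolute weight W. Define G_min as the weighted arena with vertex set V × X where X = {w(e) : e ∈ E}, Eve's vertices {(v,n) : v ∈ V_E}, initial vertex (v_I, W), an edge from (u,n) to (v,m) if and only if (u,v) ∈ E and m = min(n, w(u,v)), with weight m on this edge. Then the regret of G under the Inf payoff (both players unrestricted) equals the regret of G_min under the LimInf payoff, and also equals the regret of G_min under the LimSup payoff. Dually, defining G_max with max in place of min and initial vertex (v_I, −W), the regret of G under the Sup payoff equals the regret of G_max under the LimSup payoff (equivalently under the LimInf payoff). -/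

import Mathlib

open Filter
open scoped Classical

/-- A weighted arena `(V, V_∃, E, w, v_I)`: `VE` is the set of vertices owned
by Eve (the rest belong to Adam), `E` is the edge relation, `w` the weight
function (only relevant on edges), and `init` the initial vertex. -/
structure Arena (V : Type) where
  VE : Set V
  E : V → V → Prop
  w : V → V → ℝ
  init : V

namespace Arena

variable {V : Type} (A : Arena V)

/-- The arena is total: every vertex has an outgoing edge. -/
def Total : Prop := ∀ v, ∃ u, A.E v u

/-- `l` is a finite `E`-path from the initial vertex ending in `v`. -/
def IsHist (l : List V) (v : V) : Prop :=
  l.Chain' A.E ∧ l.head? = some A.init ∧ l.getLast? = some v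

/-- A strategy for Eve: on every history ending in a vertex of Eve it picks a
successor of that vertex. -/
def EveStrat (σ : List V → V) : Prop :=
  ∀ l v, A.IsHist l v → v ∈ A.VE → A.E v (σ l)

/-- A strategy for Adam: on every history ending in a vertex of Adam it picks
a successor of that vertex. -/
def AdamStrat (τ : List V → V) : Prop :=
  ∀ l v, A.IsHist l v → v ∉ A.VE → A.E v (τ l)

/-- The prefixes (histories) of the unique play consistent with `σ` and `τ`. -/
noncomputable def hist (σ τ : List V → V) : ℕ → List V := fun n =>
  Nat.rec [A.init]
    (fun _ l => l ++ [if l.getLastD A.init ∈ A.VE then σ l else τ l]) n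

/-- The unique play consistent with `σ` and `τ`. -/
noncomputable def play (σ τ : List V → V) (n : ℕ) : V :=
  (A.hist σ τ n).getLastD A.init

/-- The `Inf` payoff of a play: the infimum of the weights seen. -/
noncomputable def InfVal (π : ℕ → V) : ℝ := ⨅ i : ℕ, A.w (π i) (π (i + 1))

/-- The `Sup` payoff of a play: the supremum of the weights seen. -/
noncomputable def SupVal (π : ℕ → V) : ℝ := ⨆ i : ℕ, A.w (π i) (π (i + 1))

/-- The `LimInf` payoff of a play. -/
noncomputable def LimInfVal (π : ℕ → V) : ℝ :=
  Filter.liminf (fun i : ℕ => A.w (π i) (π (i + 1))) atTop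

/-- The `LimSup` payoff of a play. -/
noncomputable def LimSupVal (π : ℕ → V) : ℝ :=
  Filter.limsup (fun i : ℕ => A.w (π i) (π (i + 1))) atTop

/-- The mean-payoff (defined with `liminf`) of a play. -/
noncomputable def MPVal (π : ℕ → V) : ℝ :=
  Filter.liminf
    (fun k : ℕ => (∑ i ∈ Finset.range k, A.w (π i) (π (i + 1))) / k) atTop

/-- The mean-payoff (defined with `limsup`) of a play. -/
noncomputable def MPBarVal (π : ℕ → V) : ℝ :=
  Filter.limsup
    (fun k : ℕ => (∑ i ∈ Finset.range k, A.w (π i) (π (i + 1))) / k) atTop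

/-- The regret of the arena w.r.t. a payoff `val`, where Eve's strategies are
restricted by `PE` and Adam's by `PA`. -/
noncomputable def regretPP (val : (ℕ → V) → ℝ)
    (PE PA : (List V → V) → Prop) : ℝ :=
  ⨅ σ : {σ : List V → V // A.EveStrat σ ∧ PE σ},
    ⨆ τ : {τ : List V → V // A.AdamStrat τ ∧ PA τ},
      ((⨆ σ' : {σ' : List V → V // A.EveStrat σ' ∧ PE σ'},
          val (A.play σ'.1 τ.1)) - val (A.play σ.1 τ.1))

/-- The regret of the arena w.r.t. a payoff `val`, both players unrestricted. -/
noncomputable def regret (val : (ℕ → V) → ℝ) : ℝ :=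
  A.regretPP val (fun _ => True) (fun _ => True)

/-- The antagonistic value. -/
noncomputable def aVal (val : (ℕ → V) → ℝ) : ℝ :=
  ⨆ σ : {σ : List V → V // A.EveStrat σ},
    ⨅ τ : {τ : List V → V // A.AdamStrat τ}, val (A.play σ.1 τ.1)

/-- The cooperative value. -/
noncomputable def cVal (val : (ℕ → V) → ℝ) : ℝ :=
  ⨆ σ : {σ : List V → V // A.EveStrat σ},
    ⨆ τ : {τ : List V → V // A.AdamStrat τ}, val (A.play σ.1 τ.1)

/-- The same arena with the initial vertex moved to `v`. -/
def withInit (v : V) : Arena V := { A with init := v }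

end Arena

/-- The arena `G_min`: vertices record the minimal weight seen so far, the
weight of an edge is the recorded minimum, and the initial vertex records the
value `W`. -/
def minArena {V : Type} (A : Arena V) (W : ℝ) : Arena (V × ℝ) where
  VE := {p | p.1 ∈ A.VE}
  E := fun p q => A.E p.1 q.1 ∧ q.2 = min p.2 (A.w p.1 q.1)
  w := fun _ q => q.2
  init := (A.init, W)

/-- The arena `G_max`: vertices record the maximal weight seen so far. -/
def maxArena {V : Type} (A : Arena V) (W : ℝ) : Arena (V × ℝ) where
  VE := {p | p.1 ∈ A.VE}
  E := fun p q => A.E p.1 q.1 ∧ q.2 = max p.2 (A.w p.1 q.1)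
  w := fun _ q => q.2
  init := (A.init, W)
namespace Arena

variable {V : Type} (A : Arena V)

lemma getLastD_of_getLast? {α : Type*} {l : List α} {v d : α}
    (h : l.getLast? = some v) : l.getLastD d = v := by
  rw [List.getLastD_eq_getLast?, h]; rfl

lemma getLast?_of_ne_nil {α : Type*} {l : List α} (h : l ≠ []) (d : α) :
    l.getLast? = some (l.getLastD d) := by
  rw [List.getLastD_eq_getLast?]
  cases hl : l.getLast? with
  | none => exact absurd (List.getLast?_eq_none_iff.mp hl) h
  | some x => rfl

lemma hist_succ (σ τ : List V → V) (n : ℕ) :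
    A.hist σ τ (n + 1) = A.hist σ τ n ++
      [if (A.hist σ τ n).getLastD A.init ∈ A.VE then σ (A.hist σ τ n)
       else τ (A.hist σ τ n)] := rfl

lemma hist_cons (σ τ : List V → V) (n : ℕ) :
    ∃ t, A.hist σ τ n = A.init :: t := by
  induction n with
  | zero => exact ⟨[], rfl⟩
  | succ n ih =>
    obtain ⟨t, ht⟩ := ih
    refine ⟨t ++ [if (A.hist σ τ n).getLastD A.init ∈ A.VE then σ (A.hist σ τ n)
       else τ (A.hist σ τ n)], ?_⟩
    rw [hist_succ, ht]; simp

lemma hist_head? (σ τ : List V → V) (n : ℕ) :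
    (A.hist σ τ n).head? = some A.init := by
  obtain ⟨t, ht⟩ := A.hist_cons σ τ n
  rw [ht]; rfl

lemma hist_ne_nil (σ τ : List V → V) (n : ℕ) : A.hist σ τ n ≠ [] := by
  obtain ⟨t, ht⟩ := A.hist_cons σ τ n
  rw [ht]; simp

lemma hist_getLast? (σ τ : List V → V) (n : ℕ) :
    (A.hist σ τ n).getLast? = some (A.play σ τ n) :=
  getLast?_of_ne_nil (A.hist_ne_nil σ τ n) A.init

lemma play_zero (σ τ : List V → V) : A.play σ τ 0 = A.init := rfl

lemma play_succ (σ τ : List V → V) (n : ℕ) :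
    A.play σ τ (n + 1) =
      (if A.play σ τ n ∈ A.VE then σ (A.hist σ τ n) else τ (A.hist σ τ n)) := by
  show (A.hist σ τ (n+1)).getLastD A.init = _
  rw [hist_succ, List.getLastD_concat]; rfl

lemma hist_isHist {σ τ : List V → V} (hσ : A.EveStrat σ) (hτ : A.AdamStrat τ)
    (n : ℕ) : A.IsHist (A.hist σ τ n) (A.play σ τ n) := by
  induction n with
  | zero => exact ⟨List.isChain_singleton _, rfl, rfl⟩
  | succ n ih =>
    have hD : (A.hist σ τ n).getLastD A.init = A.play σ τ n := rfl
    have hx : A.E (A.play σ τ n)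
        (if A.play σ τ n ∈ A.VE then σ (A.hist σ τ n) else τ (A.hist σ τ n)) := by
      by_cases hm : A.play σ τ n ∈ A.VE
      · rw [if_pos hm]; exact hσ _ _ ih hm
      · rw [if_neg hm]; exact hτ _ _ ih hm
    refine ⟨?_, ?_, ?_⟩
    · rw [hist_succ, hD]
      refine List.IsChain.append ih.1 (List.isChain_singleton _) ?_
      intro y hy z hz
      rw [ih.2.2] at hy
      simp only [Option.mem_def, Option.some.injEq, List.head?_cons] at hy hz
      subst hy; subst hz; exact hx
    · exact A.hist_head? σ τ (n+1)
    · rw [hist_getLast?, play_succ]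

lemma play_step {σ τ : List V → V} (hσ : A.EveStrat σ) (hτ : A.AdamStrat τ)
    (n : ℕ) : A.E (A.play σ τ n) (A.play σ τ (n + 1)) := by
  rw [play_succ]
  by_cases hm : A.play σ τ n ∈ A.VE
  · rw [if_pos hm]; exact hσ _ _ (A.hist_isHist hσ hτ n) hm
  · rw [if_neg hm]; exact hτ _ _ (A.hist_isHist hσ hτ n) hm

end Arena
namespace Arena

variable {V : Type} (A : Arena V)

/-- Generic "record" arena, of which `minArena` and `maxArena` are instances. -/
def opA (c : ℝ → ℝ → ℝ) (W : ℝ) : Arena (V × ℝ) where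
  VE := {p | p.1 ∈ A.VE}
  E := fun p q => A.E p.1 q.1 ∧ q.2 = c p.2 (A.w p.1 q.1)
  w := fun _ q => q.2
  init := (A.init, W)

lemma minArena_eq (W : ℝ) : minArena A W = A.opA min W := rfl
lemma maxArena_eq (W : ℝ) : maxArena A W = A.opA max W := rfl

/-- Annotate a list of vertices with the running record. -/
def annot (c : ℝ → ℝ → ℝ) : ℝ → List V → List (V × ℝ)
  | _, [] => []
  | n, [v] => [(v, n)]
  | n, v :: u :: l => (v, n) :: annot c (c n (A.w v u)) (u :: l)

lemma annot_map_fst (c : ℝ → ℝ → ℝ) :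
    ∀ (l : List V) (n : ℝ), (A.annot c n l).map Prod.fst = l := by
  intro l
  induction l with
  | nil => intro n; rfl
  | cons v t ih =>
    intro n
    cases t with
    | nil => rfl
    | cons u l' => rw [annot]; simp only [List.map_cons]; rw [ih]

lemma annot_head? (c : ℝ → ℝ → ℝ) (n : ℝ) (v : V) (l : List V) :
    (A.annot c n (v :: l)).head? = some (v, n) := by
  cases l <;> rfl

lemma annot_chain' (c : ℝ → ℝ → ℝ) (W : ℝ) :
    ∀ (l : List V), l.Chain' A.E → ∀ n, (A.annot c n l).Chain' (A.opA c W).E := by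
  intro l
  induction l with
  | nil => intro _ n; exact List.isChain_nil
  | cons v t ih =>
    intro hl n
    cases t with
    | nil => exact List.isChain_singleton _
    | cons u l' =>
      replace hl := List.isChain_cons_cons.mp hl
      rw [annot]; apply List.isChain_cons.mpr
      refine ⟨?_, ih hl.2 _⟩
      intro b hb
      rw [A.annot_head? c _ u l'] at hb
      simp only [Option.mem_def, Option.some.injEq] at hb
      subst hb
      exact ⟨hl.1, rfl⟩

lemma eq_annot (c : ℝ → ℝ → ℝ) (W : ℝ) :
    ∀ (p : List (V × ℝ)) (q : V × ℝ), p.Chain' (A.opA c W).E →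
      p.head? = some q → p = A.annot c q.2 (p.map Prod.fst) := by
  intro p
  induction p with
  | nil => intro q _ h; simp at h
  | cons x t ih =>
    intro q hc hh
    have hx : q = x := by simpa using hh.symm
    subst hx
    cases t with
    | nil => rfl
    | cons y l' =>
      replace hc := List.isChain_cons_cons.mp hc
      obtain ⟨⟨hE, hsnd⟩, hc2⟩ := hc
      have h2 := ih y hc2 rfl
      show _ = A.annot c q.2 (q.1 :: y.1 :: l'.map Prod.fst)
      rw [annot, ← hsnd]
      show q :: y :: l' = (q.1, q.2) :: A.annot c y.2 ((y :: l').map Prod.fst)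
      rw [← h2]

/-- Lift a strategy of `A` to a strategy of the record arena. -/
noncomputable def toUp (c : ℝ → ℝ → ℝ) (W : ℝ) (s : List V → V) :
    List (V × ℝ) → V × ℝ := fun p =>
  (s (p.map Prod.fst),
    c (p.getLastD (A.init, W)).2
      (A.w (p.getLastD (A.init, W)).1 (s (p.map Prod.fst))))

/-- Project a strategy of the record arena to a strategy of `A`. -/
noncomputable def toDown (c : ℝ → ℝ → ℝ) (W : ℝ) (s' : List (V × ℝ) → V × ℝ) :
    List V → V := fun l => (s' (A.annot c W l)).1

lemma toDown_toUp (c : ℝ → ℝ → ℝ) (W : ℝ) (s : List V → V) :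
    A.toDown c W (A.toUp c W s) = s := by
  funext l
  show (A.toUp c W s (A.annot c W l)).1 = s l
  rw [toUp]
  simp only [annot_map_fst]

lemma isHist_map_fst {c : ℝ → ℝ → ℝ} {W : ℝ} {p : List (V × ℝ)} {q : V × ℝ}
    (hp : (A.opA c W).IsHist p q) : A.IsHist (p.map Prod.fst) q.1 := by
  refine ⟨?_, ?_, ?_⟩
  · exact (List.isChain_map Prod.fst).2 (hp.1.imp fun a b h => h.1)
  · rw [List.head?_map, hp.2.1]; rfl
  · rw [List.getLast?_map, hp.2.2]; rfl

lemma isHist_annot {c : ℝ → ℝ → ℝ} (W : ℝ) {l : List V} {v : V}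
    (h : A.IsHist l v) : ∃ m, (A.opA c W).IsHist (A.annot c W l) (v, m) := by
  have hmap := A.annot_map_fst c l W
  have hlast : (A.annot c W l).getLast?.map Prod.fst = some v := by
    rw [← List.getLast?_map, hmap, h.2.2]
  cases hg : (A.annot c W l).getLast? with
  | none => rw [hg] at hlast; simp at hlast
  | some x =>
    rw [hg] at hlast
    simp only [Option.map_some, Option.some.injEq] at hlast
    refine ⟨x.2, ?_, ?_, ?_⟩
    · exact A.annot_chain' c W l h.1 W
    · cases l with
      | nil => exact absurd h.2.1 (by simp)
      | cons a t =>
        have : a = A.init := by simpa using h.2.1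
        subst this
        exact A.annot_head? c W _ t
    · rw [hg, ← hlast]

lemma toUp_eve {σ : List V → V} (c : ℝ → ℝ → ℝ) (W : ℝ) (hs : A.EveStrat σ) :
    (A.opA c W).EveStrat (A.toUp c W σ) := by
  intro p q hp hq
  have hql : p.getLastD (A.init, W) = q := getLastD_of_getLast? hp.2.2
  have hE := hs _ _ (A.isHist_map_fst hp) hq
  exact ⟨by rw [toUp]; exact hE, by rw [toUp]; rw [hql]⟩

lemma toUp_adam {τ : List V → V} (c : ℝ → ℝ → ℝ) (W : ℝ) (hs : A.AdamStrat τ) :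
    (A.opA c W).AdamStrat (A.toUp c W τ) := by
  intro p q hp hq
  have hql : p.getLastD (A.init, W) = q := getLastD_of_getLast? hp.2.2
  have hE := hs _ _ (A.isHist_map_fst hp) hq
  exact ⟨by rw [toUp]; exact hE, by rw [toUp]; rw [hql]⟩

lemma toDown_eve {σ' : List (V × ℝ) → V × ℝ} (c : ℝ → ℝ → ℝ) (W : ℝ)
    (hs : (A.opA c W).EveStrat σ') : A.EveStrat (A.toDown c W σ') := by
  intro l v hl hv
  obtain ⟨m, hm⟩ := A.isHist_annot (c := c) W hl
  exact (hs _ _ hm hv).1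

lemma toDown_adam {τ' : List (V × ℝ) → V × ℝ} (c : ℝ → ℝ → ℝ) (W : ℝ)
    (hs : (A.opA c W).AdamStrat τ') : A.AdamStrat (A.toDown c W τ') := by
  intro l v hl hv
  obtain ⟨m, hm⟩ := A.isHist_annot (c := c) W hl
  exact (hs _ _ hm hv).1

lemma getLastD_map_fst (p : List (V × ℝ)) (d : V × ℝ) :
    (p.map Prod.fst).getLastD d.1 = (p.getLastD d).1 := by
  rw [List.getLastD_eq_getLast?, List.getLastD_eq_getLast?, List.getLast?_map]
  cases p.getLast? <;> rfl

lemma hist_map_fst {σ' τ' : List (V × ℝ) → V × ℝ} (c : ℝ → ℝ → ℝ) (W : ℝ)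
    (hσ' : (A.opA c W).EveStrat σ') (hτ' : (A.opA c W).AdamStrat τ') (n : ℕ) :
    ((A.opA c W).hist σ' τ' n).map Prod.fst =
      A.hist (A.toDown c W σ') (A.toDown c W τ') n := by
  induction n with
  | zero => rfl
  | succ n ih =>
    set B := A.opA c W with hB
    set σd := A.toDown c W σ' with hσd
    set τd := A.toDown c W τ' with hτd
    have hIs := B.hist_isHist hσ' hτ' n
    have hannot : B.hist σ' τ' n = A.annot c W (A.hist σd τd n) := by
      have h := A.eq_annot c W (B.hist σ' τ' n) B.init hIs.1 (B.hist_head? σ' τ' n)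
      rw [ih] at h
      exact h
    have hlastfst : ((B.hist σ' τ' n).getLastD B.init).1
        = (A.hist σd τd n).getLastD A.init := by
      rw [← ih]
      exact (getLastD_map_fst (B.hist σ' τ' n) B.init).symm
    have hmem : ((B.hist σ' τ' n).getLastD B.init ∈ B.VE) ↔
        ((A.hist σd τd n).getLastD A.init ∈ A.VE) := by
      show (((B.hist σ' τ' n).getLastD B.init).1 ∈ A.VE) ↔ _
      rw [hlastfst]
    rw [hist_succ, hist_succ, List.map_append, ih]
    congr 1
    by_cases h : (A.hist σd τd n).getLastD A.init ∈ A.VE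
    · rw [if_pos h, if_pos (hmem.mpr h)]
      simp only [List.map_cons, List.map_nil]
      rw [hannot]; rfl
    · rw [if_neg h, if_neg (fun hc => h (hmem.mp hc))]
      simp only [List.map_cons, List.map_nil]
      rw [hannot]; rfl

lemma play_fst {σ' τ' : List (V × ℝ) → V × ℝ} (c : ℝ → ℝ → ℝ) (W : ℝ)
    (hσ' : (A.opA c W).EveStrat σ') (hτ' : (A.opA c W).AdamStrat τ') (n : ℕ) :
    ((A.opA c W).play σ' τ' n).1 =
      A.play (A.toDown c W σ') (A.toDown c W τ') n := by
  show (((A.opA c W).hist σ' τ' n).getLastD (A.init, W)).1 = _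
  rw [← getLastD_map_fst, A.hist_map_fst c W hσ' hτ' n]
  rfl

end Arena
namespace Arena

variable {V : Type} (A : Arena V)

/-- Weights along a play of valid strategies are bounded by `W`. -/
lemma abs_play_w_le {σ τ : List V → V} {W : ℝ}
    (hW : IsGreatest {x : ℝ | ∃ u v, A.E u v ∧ x = |A.w u v|} W)
    (hσ : A.EveStrat σ) (hτ : A.AdamStrat τ) (i : ℕ) :
    |A.w (A.play σ τ i) (A.play σ τ (i + 1))| ≤ W :=
  hW.2 ⟨_, _, A.play_step hσ hτ i, rfl⟩

lemma W_nonneg {W : ℝ}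
    (hW : IsGreatest {x : ℝ | ∃ u v, A.E u v ∧ x = |A.w u v|} W) : 0 ≤ W := by
  obtain ⟨u, v, _, h⟩ := hW.1
  rw [h]; exact abs_nonneg _

lemma abs_InfVal_le {σ τ : List V → V} {W : ℝ}
    (hW : IsGreatest {x : ℝ | ∃ u v, A.E u v ∧ x = |A.w u v|} W)
    (hσ : A.EveStrat σ) (hτ : A.AdamStrat τ) :
    |A.InfVal (A.play σ τ)| ≤ W := by
  have hb : BddBelow (Set.range fun i : ℕ =>
      A.w (A.play σ τ i) (A.play σ τ (i + 1))) := by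
    refine ⟨-W, ?_⟩
    rintro x ⟨i, rfl⟩
    exact (abs_le.mp (A.abs_play_w_le hW hσ hτ i)).1
  rw [abs_le]
  constructor
  · exact le_ciInf fun i => (abs_le.mp (A.abs_play_w_le hW hσ hτ i)).1
  · exact le_trans (ciInf_le hb 0) (abs_le.mp (A.abs_play_w_le hW hσ hτ 0)).2

lemma abs_SupVal_le {σ τ : List V → V} {W : ℝ}
    (hW : IsGreatest {x : ℝ | ∃ u v, A.E u v ∧ x = |A.w u v|} W)
    (hσ : A.EveStrat σ) (hτ : A.AdamStrat τ) :
    |A.SupVal (A.play σ τ)| ≤ W := by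
  have hb : BddAbove (Set.range fun i : ℕ =>
      A.w (A.play σ τ i) (A.play σ τ (i + 1))) := by
    refine ⟨W, ?_⟩
    rintro x ⟨i, rfl⟩
    exact (abs_le.mp (A.abs_play_w_le hW hσ hτ i)).2
  rw [abs_le]
  constructor
  · exact le_trans (abs_le.mp (A.abs_play_w_le hW hσ hτ 0)).1 (le_ciSup hb 0)
  · exact ciSup_le fun i => (abs_le.mp (A.abs_play_w_le hW hσ hτ i)).2

/-- Value correspondence for the `min` record arena. -/
lemma minVal_eq {σ' τ' : List (V × ℝ) → V × ℝ} {W : ℝ}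
    (hW : IsGreatest {x : ℝ | ∃ u v, A.E u v ∧ x = |A.w u v|} W)
    (hσ' : (A.opA min W).EveStrat σ') (hτ' : (A.opA min W).AdamStrat τ') :
    (A.opA min W).LimInfVal ((A.opA min W).play σ' τ')
      = A.InfVal (A.play (A.toDown min W σ') (A.toDown min W τ')) ∧
    (A.opA min W).LimSupVal ((A.opA min W).play σ' τ')
      = A.InfVal (A.play (A.toDown min W σ') (A.toDown min W τ')) := by
  set B := A.opA min W with hB
  set σd := A.toDown min W σ' with hσd
  set τd := A.toDown min W τ' with hτd
  have hσdE : A.EveStrat σd := A.toDown_eve min W hσ'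
  have hτdA : A.AdamStrat τd := A.toDown_adam min W hτ'
  set u : ℕ → ℝ := fun i => A.w (A.play σd τd i) (A.play σd τd (i + 1)) with hu
  set s : ℕ → ℝ := fun i => (B.play σ' τ' i).2 with hs
  have hub : ∀ i, |u i| ≤ W := fun i => A.abs_play_w_le hW hσdE hτdA i
  have hs0 : s 0 = W := rfl
  have hstep : ∀ i, s (i + 1) = min (s i) (u i) := by
    intro i
    have h := B.play_step hσ' hτ' i
    have h2 := h.2
    rw [hu]
    simp only
    rw [← A.play_fst min W hσ' hτ' i, ← A.play_fst min W hσ' hτ' (i + 1)]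
    exact h2
  have hanti : Antitone s := antitone_nat_of_succ_le fun i => by
    rw [hstep i]; exact min_le_left _ _
  have hsW : ∀ i, -W ≤ s i := by
    intro i
    induction i with
    | zero => rw [hs0]; linarith [A.W_nonneg hW]
    | succ i ih => rw [hstep i]; exact le_min ih (abs_le.mp (hub i)).1
  have hsb : BddBelow (Set.range s) := ⟨-W, by rintro x ⟨i, rfl⟩; exact hsW i⟩
  have hubb : BddBelow (Set.range u) :=
    ⟨-W, by rintro x ⟨i, rfl⟩; exact (abs_le.mp (hub i)).1⟩
  have htend : Filter.Tendsto (fun i => s (i + 1)) atTop (nhds (⨅ i, s i)) :=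
    (tendsto_atTop_ciInf hanti hsb).comp (tendsto_add_atTop_nat 1)
  have hinf : (⨅ i, s i) = ⨅ i, u i := by
    apply le_antisymm
    · refine le_ciInf fun i => ?_
      exact le_trans (ciInf_le hsb (i + 1)) (by rw [hstep i]; exact min_le_right _ _)
    · refine le_ciInf fun i => ?_
      induction i with
      | zero =>
        rw [hs0]
        exact le_trans (ciInf_le hubb 0) (le_trans (le_abs_self _) (hub 0))
      | succ i ih => rw [hstep i]; exact le_min ih (ciInf_le hubb i)
  have hw : (fun i : ℕ => B.w (B.play σ' τ' i) (B.play σ' τ' (i + 1)))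
      = fun i => s (i + 1) := rfl
  constructor
  · rw [LimInfVal, hw, htend.liminf_eq, hinf]; rfl
  · rw [LimSupVal, hw, htend.limsup_eq, hinf]; rfl

/-- Value correspondence for the `max` record arena. -/
lemma maxVal_eq {σ' τ' : List (V × ℝ) → V × ℝ} {W : ℝ}
    (hW : IsGreatest {x : ℝ | ∃ u v, A.E u v ∧ x = |A.w u v|} W)
    (hσ' : (A.opA max (-W)).EveStrat σ') (hτ' : (A.opA max (-W)).AdamStrat τ') :
    (A.opA max (-W)).LimInfVal ((A.opA max (-W)).play σ' τ')
      = A.SupVal (A.play (A.toDown max (-W) σ') (A.toDown max (-W) τ')) ∧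
    (A.opA max (-W)).LimSupVal ((A.opA max (-W)).play σ' τ')
      = A.SupVal (A.play (A.toDown max (-W) σ') (A.toDown max (-W) τ')) := by
  set B := A.opA max (-W) with hB
  set σd := A.toDown max (-W) σ' with hσd
  set τd := A.toDown max (-W) τ' with hτd
  have hσdE : A.EveStrat σd := A.toDown_eve max (-W) hσ'
  have hτdA : A.AdamStrat τd := A.toDown_adam max (-W) hτ'
  set u : ℕ → ℝ := fun i => A.w (A.play σd τd i) (A.play σd τd (i + 1)) with hu
  set s : ℕ → ℝ := fun i => (B.play σ' τ' i).2 with hs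
  have hub : ∀ i, |u i| ≤ W := fun i => A.abs_play_w_le hW hσdE hτdA i
  have hs0 : s 0 = -W := rfl
  have hstep : ∀ i, s (i + 1) = max (s i) (u i) := by
    intro i
    have h := B.play_step hσ' hτ' i
    have h2 := h.2
    rw [hu]
    simp only
    rw [← A.play_fst max (-W) hσ' hτ' i, ← A.play_fst max (-W) hσ' hτ' (i + 1)]
    exact h2
  have hmono : Monotone s := monotone_nat_of_le_succ fun i => by
    rw [hstep i]; exact le_max_left _ _
  have hsW : ∀ i, s i ≤ W := by
    intro i
    induction i with
    | zero => rw [hs0]; linarith [A.W_nonneg hW]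
    | succ i ih => rw [hstep i]; exact max_le ih (abs_le.mp (hub i)).2
  have hsb : BddAbove (Set.range s) := ⟨W, by rintro x ⟨i, rfl⟩; exact hsW i⟩
  have hubb : BddAbove (Set.range u) :=
    ⟨W, by rintro x ⟨i, rfl⟩; exact (abs_le.mp (hub i)).2⟩
  have htend : Filter.Tendsto (fun i => s (i + 1)) atTop (nhds (⨆ i, s i)) :=
    (tendsto_atTop_ciSup hmono hsb).comp (tendsto_add_atTop_nat 1)
  have hsup : (⨆ i, s i) = ⨆ i, u i := by
    apply le_antisymm
    · refine ciSup_le fun i => ?_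
      induction i with
      | zero =>
        rw [hs0]
        refine le_trans ?_ (le_ciSup hubb 0)
        have := (abs_le.mp (hub 0)).1
        linarith
      | succ i ih => rw [hstep i]; exact max_le ih (le_ciSup hubb i)
    · refine ciSup_le fun i => ?_
      exact le_trans (by rw [hstep i]; exact le_max_right _ _ : u i ≤ s (i+1))
        (le_ciSup hsb (i + 1))
  have hw : (fun i : ℕ => B.w (B.play σ' τ' i) (B.play σ' τ' (i + 1)))
      = fun i => s (i + 1) := rfl
  constructor
  · rw [LimInfVal, hw, htend.liminf_eq, hsup]; rfl
  · rw [LimSupVal, hw, htend.limsup_eq, hsup]; rfl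

end Arena
/-- Abstract transfer of the `⨅⨆(⨆ - ·)` regret pattern along maps between
index types. -/
lemma transfer_core {SA TA SB TB : Type}
    [Nonempty SA] [Nonempty TA] [Nonempty SB] [Nonempty TB]
    (f : SA → TA → ℝ) (g : SB → TB → ℝ)
    (FE : SA → SB) (FAd : TA → TB) (BE : SB → SA) (BAd : TB → TA)
    (hg : ∀ σ' τ', g σ' τ' = f (BE σ') (BAd τ'))
    (hrE : ∀ σ, BE (FE σ) = σ) (hrA : ∀ τ, BAd (FAd τ) = τ)
    (M : ℝ) (hf : ∀ σ τ, |f σ τ| ≤ M) :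
    (⨅ σ, ⨆ τ, ((⨆ σ'', f σ'' τ) - f σ τ))
      = (⨅ σ', ⨆ τ', ((⨆ σ''', g σ''' τ') - g σ' τ')) := by
  have hfM : ∀ τ, BddAbove (Set.range fun σ'' => f σ'' τ) := fun τ =>
    ⟨M, by rintro x ⟨σ'', rfl⟩; exact (abs_le.mp (hf _ _)).2⟩
  have hgM : ∀ τ', BddAbove (Set.range fun σ''' => g σ''' τ') := fun τ' =>
    ⟨M, by rintro x ⟨σ''', rfl⟩; dsimp only; rw [hg]; exact (abs_le.mp (hf _ _)).2⟩
  have hS : ∀ τ', (⨆ σ''', g σ''' τ') = ⨆ σ'', f σ'' (BAd τ') := by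
    intro τ'
    apply le_antisymm
    · refine ciSup_le fun σ''' => ?_
      rw [hg]
      exact le_ciSup (hfM _) (BE σ''')
    · refine ciSup_le fun σ'' => ?_
      have h1 : f σ'' (BAd τ') = g (FE σ'') τ' := by rw [hg, hrE]
      rw [h1]
      exact le_ciSup (hgM _) (FE σ'')
  have hterm_nonneg : ∀ (σ : SA) (τ : TA), 0 ≤ (⨆ σ'', f σ'' τ) - f σ τ :=
    fun σ τ => sub_nonneg.2 (le_ciSup (hfM τ) σ)
  have hterm_le : ∀ (σ : SA) (τ : TA), (⨆ σ'', f σ'' τ) - f σ τ ≤ 2 * M := by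
    intro σ τ
    have h1 : (⨆ σ'', f σ'' τ) ≤ M := ciSup_le fun σ'' => (abs_le.mp (hf _ _)).2
    have h2 : -M ≤ f σ τ := (abs_le.mp (hf _ _)).1
    linarith
  have hTA : ∀ σ : SA, BddAbove (Set.range fun τ => (⨆ σ'', f σ'' τ) - f σ τ) :=
    fun σ => ⟨2 * M, by rintro x ⟨τ, rfl⟩; exact hterm_le σ τ⟩
  have hTB : ∀ σ' : SB,
      BddAbove (Set.range fun τ' => (⨆ σ''', g σ''' τ') - g σ' τ') := by
    intro σ'
    refine ⟨2 * M, ?_⟩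
    rintro x ⟨τ', rfl⟩
    dsimp only
    rw [hS, hg]
    exact hterm_le (BE σ') (BAd τ')
  have hH : ∀ σ', (⨆ τ', ((⨆ σ''', g σ''' τ') - g σ' τ'))
      = ⨆ τ, ((⨆ σ'', f σ'' τ) - f (BE σ') τ) := by
    intro σ'
    apply le_antisymm
    · refine ciSup_le fun τ' => ?_
      rw [hS, hg]
      exact le_ciSup (hTA (BE σ')) (BAd τ')
    · refine ciSup_le fun τ => ?_
      have e1 : (⨆ σ'', f σ'' τ) - f (BE σ') τ
          = (⨆ σ''', g σ''' (FAd τ)) - g σ' (FAd τ) := by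
        rw [hS, hrA, hg, hrA]
      rw [e1]
      exact le_ciSup (hTB σ') (FAd τ)
  have hIlowA : BddBelow (Set.range fun σ : SA =>
      ⨆ τ, ((⨆ σ'', f σ'' τ) - f σ τ)) := by
    refine ⟨0, ?_⟩
    rintro x ⟨σ, rfl⟩
    exact le_ciSup_of_le (hTA σ) (Classical.arbitrary TA) (hterm_nonneg σ _)
  have hIlowB : BddBelow (Set.range fun σ' : SB =>
      ⨆ τ', ((⨆ σ''', g σ''' τ') - g σ' τ')) := by
    refine ⟨0, ?_⟩
    rintro x ⟨σ', rfl⟩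
    dsimp only
    rw [hH]
    exact le_ciSup_of_le (hTA (BE σ')) (Classical.arbitrary TA)
      (hterm_nonneg (BE σ') _)
  apply le_antisymm
  · refine le_ciInf fun σ' => ?_
    rw [hH σ']
    exact ciInf_le hIlowA (BE σ')
  · refine le_ciInf fun σ => ?_
    have e : (⨆ τ', ((⨆ σ''', g σ''' τ') - g (FE σ) τ'))
        = ⨆ τ, ((⨆ σ'', f σ'' τ) - f σ τ) := by rw [hH (FE σ), hrE]
    calc (⨅ σ', ⨆ τ', ((⨆ σ''', g σ''' τ') - g σ' τ'))
        ≤ ⨆ τ', ((⨆ σ''', g σ''' τ') - g (FE σ) τ') := ciInf_le hIlowB (FE σ)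
      _ = _ := e

/-- Transfer of regret along strategy translations preserving values. -/
lemma regret_transfer {V V' : Type} (A : Arena V) (B : Arena V')
    (valA : (ℕ → V) → ℝ) (valB : (ℕ → V') → ℝ)
    (F : (List V → V) → (List V' → V')) (Bk : (List V' → V') → (List V → V))
    (hFE : ∀ σ, A.EveStrat σ → B.EveStrat (F σ))
    (hFA : ∀ τ, A.AdamStrat τ → B.AdamStrat (F τ))
    (hBE : ∀ σ', B.EveStrat σ' → A.EveStrat (Bk σ'))
    (hBA : ∀ τ', B.AdamStrat τ' → A.AdamStrat (Bk τ'))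
    (hround : ∀ s, Bk (F s) = s)
    (hval : ∀ σ' τ', B.EveStrat σ' → B.AdamStrat τ' →
        valB (B.play σ' τ') = valA (A.play (Bk σ') (Bk τ')))
    (M : ℝ)
    (hbound : ∀ σ τ, A.EveStrat σ → A.AdamStrat τ → |valA (A.play σ τ)| ≤ M)
    (s₀ : List V → V) (hs₀ : ∀ l v, A.IsHist l v → A.E v (s₀ l)) :
    A.regret valA = B.regret valB := by
  have hs₀E : A.EveStrat s₀ := fun l v h _ => hs₀ l v h
  have hs₀A : A.AdamStrat s₀ := fun l v h _ => hs₀ l v h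
  haveI i1 : Nonempty {σ : List V → V // A.EveStrat σ ∧ True} :=
    ⟨⟨s₀, hs₀E, trivial⟩⟩
  haveI i2 : Nonempty {τ : List V → V // A.AdamStrat τ ∧ True} :=
    ⟨⟨s₀, hs₀A, trivial⟩⟩
  haveI i3 : Nonempty {σ' : List V' → V' // B.EveStrat σ' ∧ True} :=
    ⟨⟨F s₀, hFE _ hs₀E, trivial⟩⟩
  haveI i4 : Nonempty {τ' : List V' → V' // B.AdamStrat τ' ∧ True} :=
    ⟨⟨F s₀, hFA _ hs₀A, trivial⟩⟩
  show A.regretPP valA _ _ = B.regretPP valB _ _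
  rw [Arena.regretPP, Arena.regretPP]
  exact transfer_core
    (fun (σ : {σ : List V → V // A.EveStrat σ ∧ True})
         (τ : {τ : List V → V // A.AdamStrat τ ∧ True}) =>
        valA (A.play σ.1 τ.1))
    (fun (σ' : {σ' : List V' → V' // B.EveStrat σ' ∧ True})
         (τ' : {τ' : List V' → V' // B.AdamStrat τ' ∧ True}) =>
        valB (B.play σ'.1 τ'.1))
    (fun σ => ⟨F σ.1, hFE _ σ.2.1, trivial⟩)
    (fun τ => ⟨F τ.1, hFA _ τ.2.1, trivial⟩)
    (fun σ' => ⟨Bk σ'.1, hBE _ σ'.2.1, trivial⟩)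
    (fun τ' => ⟨Bk τ'.1, hBA _ τ'.2.1, trivial⟩)
    (fun σ' τ' => hval _ _ σ'.2.1 τ'.2.1)
    (fun σ => Subtype.ext (hround σ.1))
    (fun τ => Subtype.ext (hround τ.1))
    M
    (fun σ τ => hbound _ _ σ.2.1 τ.2.1)

/-- Lemma 1, prefindepping. For a weighted arena `G` with
integer weights of maximal absolute value `W`, the regret of `G` under the
`Inf` payoff equals the regret of `G_min` (with initial record `W`) under
`LimInf` (equivalently `LimSup`), and the regret of `G` under the `Sup`
payoff equals the regret of `G_max` (with initial record `-W`) under `LimSup`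
(equivalently `LimInf`). -/
theorem regret_inf_sup_prefix_independent {V : Type} [Fintype V] (A : Arena V)
    (htotal : A.Total)
    (hint : ∀ u v, A.E u v → ∃ k : ℤ, A.w u v = (k : ℝ))
    (W : ℝ) (hW : IsGreatest {x : ℝ | ∃ u v, A.E u v ∧ x = |A.w u v|} W) :
    A.regret A.InfVal = (minArena A W).regret (minArena A W).LimInfVal ∧
    A.regret A.InfVal = (minArena A W).regret (minArena A W).LimSupVal ∧
    A.regret A.SupVal = (maxArena A (-W)).regret (maxArena A (-W)).LimSupVal ∧
    A.regret A.SupVal = (maxArena A (-W)).regret (maxArena A (-W)).LimInfVal := by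
  classical
  set s₀ : List V → V := fun l => (htotal (l.getLastD A.init)).choose with hs₀def
  have hs₀ : ∀ l v, A.IsHist l v → A.E v (s₀ l) := by
    intro l v h
    have hl : l.getLastD A.init = v := Arena.getLastD_of_getLast? h.2.2
    have h2 : A.E (l.getLastD A.init) (s₀ l) :=
      (htotal (l.getLastD A.init)).choose_spec
    rw [hl] at h2
    exact h2
  have hmin : ∀ val : (ℕ → V × ℝ) → ℝ,
      (∀ σ' τ', (A.opA min W).EveStrat σ' → (A.opA min W).AdamStrat τ' →
        val ((A.opA min W).play σ' τ')
          = A.InfVal (A.play (A.toDown min W σ') (A.toDown min W τ'))) →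
      A.regret A.InfVal = (A.opA min W).regret val := by
    intro val hval
    exact regret_transfer A (A.opA min W) A.InfVal val
      (A.toUp min W) (A.toDown min W)
      (fun σ h => A.toUp_eve min W h) (fun τ h => A.toUp_adam min W h)
      (fun σ' h => A.toDown_eve min W h) (fun τ' h => A.toDown_adam min W h)
      (A.toDown_toUp min W) hval W
      (fun σ τ h1 h2 => A.abs_InfVal_le hW h1 h2) s₀ hs₀
  have hmax : ∀ val : (ℕ → V × ℝ) → ℝ,
      (∀ σ' τ', (A.opA max (-W)).EveStrat σ' → (A.opA max (-W)).AdamStrat τ' →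
        val ((A.opA max (-W)).play σ' τ')
          = A.SupVal (A.play (A.toDown max (-W) σ') (A.toDown max (-W) τ'))) →
      A.regret A.SupVal = (A.opA max (-W)).regret val := by
    intro val hval
    exact regret_transfer A (A.opA max (-W)) A.SupVal val
      (A.toUp max (-W)) (A.toDown max (-W))
      (fun σ h => A.toUp_eve max (-W) h) (fun τ h => A.toUp_adam max (-W) h)
      (fun σ' h => A.toDown_eve max (-W) h) (fun τ' h => A.toDown_adam max (-W) h)
      (A.toDown_toUp max (-W)) hval W
      (fun σ τ h1 h2 => A.abs_SupVal_le hW h1 h2) s₀ hs₀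
  rw [A.minArena_eq W, A.maxArena_eq (-W)]
  refine ⟨?_, ?_, ?_, ?_⟩
  · exact hmin _ (fun σ' τ' h1 h2 => (A.minVal_eq hW h1 h2).1)
  · exact hmin _ (fun σ' τ' h1 h2 => (A.minVal_eq hW h1 h2).2)
  · exact hmax _ (fun σ' τ' h1 h2 => (A.maxVal_eq hW h1 h2).2)
  · exact hmax _ (fun σ' τ' h1 h2 => (A.maxVal_eq hW h1 h2).1)
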